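/- Let m ≥ 1 and L > 0, let f : ℝ^m → ℝ be differentiable with L-Lipschitz gradient on the nonnegative orthant ℝ^m_+, and let λ* ∈ ℝ^m_+ satisfy f(λ*) ≤ f(μ) for all μ ∈ ℝ^m_+. Fix λ ∈ ℝ^m_+, write a := ∇f(λ), and let J := {i : a_i ≥ 0 and λ_i ≥ a_i/L}. Then Σ_{i ∈ J} a_i² ≤ 2L·(f(λ) − f(λ*)). -/

import Mathlib

open Set

lemma descent {E : Type*} [NormedAddCommGroup E] [InnerProductSpace ℝ E] [CompleteSpace E]
    (f : E → ℝ) (hf : Differentiable ℝ f) (L : ℝ) (x y : E)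
    (hseg : ∀ t ∈ Icc (0:ℝ) 1,
      ‖gradient f (x + t • (y - x)) - gradient f x‖ ≤ L * t * ‖y - x‖) :
    f y ≤ f x + inner ℝ (gradient f x) (y - x) + L / 2 * ‖y - x‖ ^ 2 := by
  set v := y - x with hv
  have hc : ∀ t : ℝ, HasDerivAt (fun t : ℝ => x + t • v) v t := by
    intro t
    simpa using ((hasDerivAt_id t).smul_const v).const_add x
  have hfc : ∀ t : ℝ, HasDerivAt (fun t : ℝ => f (x + t • v))
      (inner ℝ (gradient f (x + t • v)) v : ℝ) t := by
    intro t
    have hg : HasGradientAt f (gradient f (x + t • v)) (x + t • v) :=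
      (hf _).hasGradientAt
    have hF := (hasGradientAt_iff_hasFDerivAt.mp hg).comp_hasDerivAt t (hc t)
    exact hF
  set g : ℝ → ℝ := fun t => f (x + t • v) - t * inner ℝ (gradient f x) v
      - L / 2 * t ^ 2 * ‖v‖ ^ 2 with hg
  have hgd : ∀ t : ℝ, HasDerivAt g
      ((inner ℝ (gradient f (x + t • v)) v : ℝ) - inner ℝ (gradient f x) v
        - L * t * ‖v‖ ^ 2) t := by
    intro t
    have h1 : HasDerivAt (fun t : ℝ => t * (inner ℝ (gradient f x) v : ℝ))
        (inner ℝ (gradient f x) v) t := by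
      simpa using (hasDerivAt_id t).mul_const (inner ℝ (gradient f x) v : ℝ)
    have h2 : HasDerivAt (fun t : ℝ => L / 2 * t ^ 2 * ‖v‖ ^ 2)
        (L * t * ‖v‖ ^ 2) t := by
      have := ((hasDerivAt_pow 2 t).const_mul (L / 2)).mul_const (‖v‖ ^ 2)
      refine this.congr_deriv ?_
      rw [show (2:ℕ) - 1 = 1 from rfl]; push_cast; ring
    exact ((hfc t).sub h1).sub h2
  have hanti : AntitoneOn g (Icc 0 1) := by
    apply antitoneOn_of_deriv_nonpos (convex_Icc 0 1)
    · exact fun t _ => ((hgd t).continuousAt).continuousWithinAt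
    · intro t ht
      exact ((hgd t).differentiableAt).differentiableWithinAt
    · intro t ht
      rw [interior_Icc] at ht
      rw [(hgd t).deriv]
      have hb : (inner ℝ (gradient f (x + t • v)) v : ℝ) - inner ℝ (gradient f x) v
          ≤ L * t * ‖v‖ ^ 2 := by
        have h3 : (inner ℝ (gradient f (x + t • v)) v : ℝ) - inner ℝ (gradient f x) v
            = inner ℝ (gradient f (x + t • v) - gradient f x) v := by
          rw [inner_sub_left]
        rw [h3]
        calc (inner ℝ (gradient f (x + t • v) - gradient f x) v : ℝ)
            ≤ ‖gradient f (x + t • v) - gradient f x‖ * ‖v‖ := real_inner_le_norm _ _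
          _ ≤ (L * t * ‖v‖) * ‖v‖ := by
              apply mul_le_mul_of_nonneg_right _ (norm_nonneg v)
              exact hseg t (Ioo_subset_Icc_self ht)
          _ = L * t * ‖v‖ ^ 2 := by ring
      linarith
  have h01 := hanti (left_mem_Icc.mpr zero_le_one) (right_mem_Icc.mpr zero_le_one) zero_le_one
  simp only [hg] at h01
  have hx0 : x + (0:ℝ) • v = x := by simp
  have hx1 : x + (1:ℝ) • v = y := by simp [hv]
  rw [hx0, hx1] at h01
  simp at h01 ⊢
  linarith

theorem stmt_8 (m : ℕ) (hm : 1 ≤ m) (L : ℝ) (hL : 0 < L)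
    (f : EuclideanSpace ℝ (Fin m) → ℝ) (hf : Differentiable ℝ f)
    (hlip : ∀ x : EuclideanSpace ℝ (Fin m), (∀ i, 0 ≤ x i) →
      ∀ y : EuclideanSpace ℝ (Fin m), (∀ i, 0 ≤ y i) →
      ‖gradient f x - gradient f y‖ ≤ L * ‖x - y‖)
    (lstar : EuclideanSpace ℝ (Fin m)) (hstar : ∀ i, 0 ≤ lstar i)
    (hmin : ∀ μ : EuclideanSpace ℝ (Fin m), (∀ i, 0 ≤ μ i) → f lstar ≤ f μ)
    (lam : EuclideanSpace ℝ (Fin m)) (hlam : ∀ i, 0 ≤ lam i) :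
    ∑ i ∈ Finset.univ.filter
        (fun i => 0 ≤ gradient f lam i ∧ gradient f lam i / L ≤ lam i),
      (gradient f lam i) ^ 2 ≤ 2 * L * (f lam - f lstar) := by
  classical
  set a : EuclideanSpace ℝ (Fin m) := gradient f lam with ha
  set J : Finset (Fin m) := Finset.univ.filter
    (fun i => 0 ≤ a i ∧ a i / L ≤ lam i) with hJ
  set S : ℝ := ∑ i ∈ J, (a i) ^ 2 with hS
  set μ : EuclideanSpace ℝ (Fin m) :=
    WithLp.toLp 2 (fun i => if 0 ≤ a i ∧ a i / L ≤ lam i then lam i - a i / L else lam i) with hμ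
  have hμi : ∀ i, μ i = if 0 ≤ a i ∧ a i / L ≤ lam i then lam i - a i / L else lam i :=
    fun i => rfl
  have hμpos : ∀ i, 0 ≤ μ i := by
    intro i
    rw [hμi i]
    split
    · next h => linarith [h.2]
    · exact hlam i
  set d : EuclideanSpace ℝ (Fin m) := μ - lam with hd
  have hdi : ∀ i, d i = if 0 ≤ a i ∧ a i / L ≤ lam i then -(a i / L) else 0 := by
    intro i
    have h0 : d i = μ i - lam i := rfl
    rw [h0, hμi i]
    split <;> ring
  have hSnn : 0 ≤ S := Finset.sum_nonneg fun i _ => sq_nonneg _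
  -- inner ℝ a d
  have hinner : (inner ℝ a d : ℝ) = -(1 / L) * S := by
    calc (inner ℝ a d : ℝ) = ∑ i, a i * d i := by
          rw [PiLp.inner_apply]
          simp [RCLike.inner_apply]
          exact Finset.sum_congr rfl fun i _ => by ring
      _ = ∑ i, if 0 ≤ a i ∧ a i / L ≤ lam i then -((a i) ^ 2 / L) else 0 := by
          refine Finset.sum_congr rfl fun i _ => ?_
          rw [hdi i]; split <;> ring
      _ = ∑ i ∈ J, -((a i) ^ 2 / L) := by rw [hJ, Finset.sum_filter]
      _ = -(1 / L) * S := by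
          rw [hS, Finset.mul_sum]
          exact Finset.sum_congr rfl fun i _ => by ring
  -- norm of d
  have hnorm : ‖d‖ ^ 2 = S / L ^ 2 := by
    rw [← real_inner_self_eq_norm_sq]
    calc (inner ℝ d d : ℝ) = ∑ i, d i * d i := by
          rw [PiLp.inner_apply]
          simp [RCLike.inner_apply]
          exact Finset.sum_congr rfl fun i _ => by ring
      _ = ∑ i, if 0 ≤ a i ∧ a i / L ≤ lam i then (a i) ^ 2 / L ^ 2 else 0 := by
          refine Finset.sum_congr rfl fun i _ => ?_
          rw [hdi i]; split
          · field_simp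
          · ring
      _ = ∑ i ∈ J, (a i) ^ 2 / L ^ 2 := by rw [hJ, Finset.sum_filter]
      _ = S / L ^ 2 := by
          rw [hS, Finset.sum_div]
  -- segment bound
  have hseg : ∀ t ∈ Icc (0:ℝ) 1,
      ‖gradient f (lam + t • (μ - lam)) - gradient f lam‖ ≤ L * t * ‖μ - lam‖ := by
    intro t ht
    have hpos : ∀ i, 0 ≤ (lam + t • d) i := by
      intro i
      have hco : (lam + t • d) i = lam i + t * d i := rfl
      rw [hco, hdi i]
      split
      · next h =>
        have hq : 0 ≤ a i / L := div_nonneg h.1 hL.le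
        nlinarith [mul_le_mul_of_nonneg_right ht.2 hq, h.2]
      · simp [hlam i]
    have := hlip (lam + t • d) hpos lam hlam
    have hsub : (lam + t • d) - lam = t • d := by abel
    rw [hsub, norm_smul, Real.norm_eq_abs, abs_of_nonneg ht.1] at this
    calc ‖gradient f (lam + t • (μ - lam)) - gradient f lam‖
        = ‖gradient f (lam + t • d) - gradient f lam‖ := by rw [hd]
      _ ≤ L * (t * ‖d‖) := this
      _ = L * t * ‖μ - lam‖ := by rw [← hd]; ring
  have hdesc := descent f hf L lam μ hseg
  have hfμ : f μ ≤ f lam - S / (2 * L) := by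
    rw [← hd, ← ha] at hdesc
    rw [hinner, hnorm] at hdesc
    have hL2 : (0:ℝ) < L ^ 2 := by positivity
    calc f μ ≤ f lam + -(1 / L) * S + L / 2 * (S / L ^ 2) := hdesc
      _ = f lam - S / (2 * L) := by field_simp; ring
  have hfs := hmin μ hμpos
  have hkey : S / (2 * L) ≤ f lam - f lstar := by linarith
  have h2L : (0:ℝ) < 2 * L := by linarith
  rw [div_le_iff₀ h2L] at hkey
  calc (∑ i ∈ Finset.univ.filter
        (fun i => 0 ≤ gradient f lam i ∧ gradient f lam i / L ≤ lam i),
      (gradient f lam i) ^ 2) = S := rfl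
    _ ≤ (f lam - f lstar) * (2 * L) := hkey
    _ = 2 * L * (f lam - f lstar) := by ring
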